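/- Let x_1, …, x_n ∈ ℝ^{2n} be linearly independent vectors spanning a Lagrangian subspace L, i.e. x_iᵀ J x_j = 0 for all i, j, set X := [x_1 ⋯ x_n] ∈ ℝ^{2n×n}, let C ∈ ℝ^{n×n} be a companion matrix, let H̃ := X C X⁺ + Jᵀ (X C X⁺)ᵀ J, and let X^⊥ ∈ ℝ^{2n×n} be a matrix whose columns form an orthonormal basis of L^⊥. Then a matrix H ∈ ℝ^{2n×2n} is skew-Hamiltonian and satisfies H X = X C if and only if H = H̃ + Jᵀ X^⊥ S (X^⊥)ᵀ for some skew-symmetric matrix S ∈ ℝ^{n×n}. -/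

import Mathlib

open Matrix

noncomputable section

/-- The canonical skew-symmetric matrix `J = [[0, I],[-I, 0]]`. -/
def Jmat (n : ℕ) : Matrix (Fin n ⊕ Fin n) (Fin n ⊕ Fin n) ℝ :=
  Matrix.fromBlocks 0 1 (-1) 0

/-- A matrix `H` is skew-Hamiltonian if `Jᵀ Hᵀ J = H`. -/
def IsSkewHamiltonian {n : ℕ} (H : Matrix (Fin n ⊕ Fin n) (Fin n ⊕ Fin n) ℝ) : Prop :=
  (Jmat n)ᵀ * Hᵀ * Jmat n = H

/-- `X = [x_1 ⋯ x_n] ∈ ℝ^{2n×n}`. -/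
def Xfull {n : ℕ} (x : Fin n → (Fin n ⊕ Fin n) → ℝ) :
    Matrix (Fin n ⊕ Fin n) (Fin n) ℝ :=
  Matrix.of fun i j => x j i

/-- The Moore–Penrose pseudoinverse `X⁺ = (Xᵀ X)⁻¹ Xᵀ` of `X`
(for `X` with linearly independent columns). -/
def Xpinv {n : ℕ} (x : Fin n → (Fin n ⊕ Fin n) → ℝ) :
    Matrix (Fin n) (Fin n ⊕ Fin n) ℝ :=
  ((Xfull x)ᵀ * Xfull x)⁻¹ * (Xfull x)ᵀ

/-- A companion matrix: ones on the subdiagonal, last column arbitrary, zeros elsewhere;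
equivalently `C e_k = e_{k+1}` for `k = 1, …, n-1`. -/
def IsCompanion {n : ℕ} (C : Matrix (Fin n) (Fin n) ℝ) : Prop :=
  ∀ k : Fin n, k.1 + 1 < n → ∀ i : Fin n, C i k = if i.1 = k.1 + 1 then 1 else 0

/-- `H̃ = X C X⁺ + Jᵀ (X C X⁺)ᵀ J`. -/
def Htilde {n : ℕ} (x : Fin n → (Fin n ⊕ Fin n) → ℝ) (C : Matrix (Fin n) (Fin n) ℝ) :
    Matrix (Fin n ⊕ Fin n) (Fin n ⊕ Fin n) ℝ :=
  Xfull x * C * Xpinv x + (Jmat n)ᵀ * (Xfull x * C * Xpinv x)ᵀ * Jmat n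

lemma Jmat_transpose (n : ℕ) : (Jmat n)ᵀ = -Jmat n := by
  simp [Jmat, Matrix.fromBlocks_transpose, Matrix.fromBlocks_neg]

lemma Jmat_mul_Jmat (n : ℕ) : Jmat n * Jmat n = -1 := by
  ext i j
  rcases i with i | i <;> rcases j with j | j <;>
    simp [Jmat, Matrix.fromBlocks_multiply, Matrix.one_apply]

/-- Characterization of all skew-Hamiltonian matrices `H` with `H X = X C`:
`H` is skew-Hamiltonian with `H X = X C` iff `H = H̃ + Jᵀ X^⊥ S (X^⊥)ᵀ` for some
skew-symmetric `S ∈ ℝ^{n×n}`, where the columns of `X^⊥` form an orthonormal basis of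
`L^⊥`, `L = span{x_1,…,x_n}`. -/
theorem skewHamiltonian_HX_eq_XC_iff {n : ℕ} (x : Fin n → (Fin n ⊕ Fin n) → ℝ)
    (hLI : LinearIndependent ℝ x)
    (hLag : ∀ i j : Fin n, x i ⬝ᵥ (Jmat n *ᵥ x j) = 0)
    (C : Matrix (Fin n) (Fin n) ℝ) (hC : IsCompanion C)
    (Xperp : Matrix (Fin n ⊕ Fin n) (Fin n) ℝ)
    (hON : Xperpᵀ * Xperp = 1)
    (hperp : ∀ v : (Fin n ⊕ Fin n) → ℝ,
      (∃ w : Fin n → ℝ, Xperp *ᵥ w = v) ↔ ∀ k : Fin n, v ⬝ᵥ x k = 0)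
    (H : Matrix (Fin n ⊕ Fin n) (Fin n ⊕ Fin n) ℝ) :
    (IsSkewHamiltonian H ∧ H * Xfull x = Xfull x * C) ↔
    ∃ S : Matrix (Fin n) (Fin n) ℝ, Sᵀ = -S ∧
      H = Htilde x C + (Jmat n)ᵀ * (Xperp * S * Xperpᵀ) := by
  set J := Jmat n with hJdef
  set X := Xfull x with hXdef
  set Xp := Xpinv x with hXpdef
  have hJt : Jᵀ = -J := Jmat_transpose n
  have hJJ : J * J = -1 := Jmat_mul_Jmat n
  have hJtJ : Jᵀ * J = 1 := by rw [hJt, neg_mul, hJJ, neg_neg]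
  have hJJt : J * Jᵀ = 1 := by rw [hJt, mul_neg, hJJ, neg_neg]
  -- Gram matrix invertibility and X⁺ X = 1
  have hGram : IsUnit (Xᵀ * X) := by
    rw [← Matrix.mulVec_injective_iff_isUnit]
    intro a b hab
    have hw : (Xᵀ * X) *ᵥ (a - b) = 0 := by
      rw [Matrix.mulVec_sub, hab, sub_self]
    have h1 : (X *ᵥ (a - b)) ⬝ᵥ (X *ᵥ (a - b)) = 0 := by
      have h := congrArg (fun v => (a - b) ⬝ᵥ v) hw
      simp only [dotProduct_zero] at h
      rw [← Matrix.mulVec_mulVec, Matrix.dotProduct_mulVec,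
        Matrix.vecMul_transpose] at h
      exact h
    have h2 : X *ᵥ (a - b) = 0 := dotProduct_self_eq_zero.mp h1
    have h3 : ∑ j, (a - b) j • x j = 0 := by
      funext i
      have := congrFun h2 i
      simpa [hXdef, Xfull, Matrix.mulVec, dotProduct, mul_comm,
        Finset.sum_apply] using this
    have h4 := Fintype.linearIndependent_iff.mp hLI _ h3
    exact sub_eq_zero.mp (funext fun j => h4 j)
  have hpX : Xp * X = 1 := by
    rw [hXpdef, Xpinv, ← hXdef, Matrix.mul_assoc]
    exact Matrix.nonsing_inv_mul _ ((Matrix.isUnit_iff_isUnit_det _).mp hGram)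
  -- Lagrangian condition as a matrix identity
  have hXJX : Xᵀ * (J * X) = 0 := by
    ext i j
    have := hLag i j
    simp only [Matrix.mul_apply, Matrix.transpose_apply, Matrix.zero_apply]
    simpa [hXdef, Xfull, dotProduct, Matrix.mulVec, Matrix.mul_apply,
      Finset.mul_sum, mul_comm, mul_left_comm] using this
  -- Xperpᵀ X = 0
  have hperpX : Xperpᵀ * X = 0 := by
    ext j k
    have hmem : ∃ w : Fin n → ℝ, Xperp *ᵥ w = fun i => Xperp i j :=
      ⟨Pi.single j 1, by funext i; simp [Matrix.mulVec_single]⟩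
    have := (hperp _).mp hmem k
    simpa [hXdef, Xfull, dotProduct, Matrix.mul_apply] using this
  -- columns-in-perp implies projection identity
  have hproj : ∀ N : Matrix (Fin n ⊕ Fin n) (Fin n ⊕ Fin n) ℝ,
      Nᵀ * X = 0 → Xperp * (Xperpᵀ * N) = N := by
    intro N hN
    have hcol : ∀ j, ∃ w : Fin n → ℝ, Xperp *ᵥ w = fun i => N i j := by
      intro j
      refine (hperp _).mpr fun k => ?_
      have := congrFun (congrFun hN j) k
      simpa [hXdef, Xfull, dotProduct, Matrix.mul_apply] using this
    choose w hw using hcol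
    have hfac : Xperp * (Matrix.of fun a j => w j a) = N := by
      ext i j
      have := congrFun (hw j) i
      simpa [Matrix.mul_apply, Matrix.mulVec, dotProduct] using this
    rw [← hfac, ← Matrix.mul_assoc Xperpᵀ Xperp, hON, Matrix.one_mul]
  -- Htilde X = X C
  have hA : X * C * Xp * X = X * C := by
    rw [Matrix.mul_assoc, hpX, Matrix.mul_one]
  have hHtX : Htilde x C * X = X * C := by
    rw [Htilde, ← hJdef, ← hXdef, ← hXpdef, Matrix.add_mul, hA]
    simp only [Matrix.transpose_mul, Matrix.mul_assoc]
    rw [hXJX]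
    simp
  -- Htilde is skew-Hamiltonian
  have hHtSH : IsSkewHamiltonian (Htilde x C) := by
    rw [IsSkewHamiltonian, Htilde, ← hJdef, ← hXdef, ← hXpdef]
    have h1 : ∀ A : Matrix (Fin n ⊕ Fin n) (Fin n ⊕ Fin n) ℝ,
        (A + Jᵀ * Aᵀ * J)ᵀ = Aᵀ + Jᵀ * (A * J) := by
      intro A
      rw [Matrix.transpose_add, Matrix.transpose_mul, Matrix.transpose_mul,
        Matrix.transpose_transpose, Matrix.transpose_transpose]
    rw [h1, Matrix.mul_add, Matrix.add_mul]
    have h2 : ∀ A : Matrix (Fin n ⊕ Fin n) (Fin n ⊕ Fin n) ℝ,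
        Jᵀ * (Jᵀ * (A * J)) * J = A := by
      intro A
      simp only [Matrix.mul_assoc, hJJ, Matrix.mul_neg, Matrix.mul_one, hJt,
        Matrix.neg_mul, neg_neg]
      rw [← Matrix.mul_assoc, hJJ, Matrix.neg_mul, Matrix.one_mul, neg_neg]
    rw [h2, add_comm, Matrix.mul_assoc]
  -- skew part identity : for skew S, K := Jᵀ (Xperp S Xperpᵀ) is skew-Hamiltonian
  have hKSH : ∀ S : Matrix (Fin n) (Fin n) ℝ, Sᵀ = -S →
      IsSkewHamiltonian (Jᵀ * (Xperp * S * Xperpᵀ)) := by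
    intro S hS
    rw [IsSkewHamiltonian, ← hJdef]
    have hMt : (Xperp * S * Xperpᵀ)ᵀ = -(Xperp * S * Xperpᵀ) := by
      rw [Matrix.transpose_mul, Matrix.transpose_mul,
        Matrix.transpose_transpose, hS]
      simp only [Matrix.neg_mul, Matrix.mul_neg, Matrix.mul_assoc]
    rw [Matrix.transpose_mul, Matrix.transpose_transpose, hMt]
    simp only [Matrix.neg_mul, Matrix.mul_neg, Matrix.mul_assoc, hJJ,
      Matrix.mul_one, neg_neg]
  constructor
  · rintro ⟨hSH, hHX⟩
    -- K := H - Htilde, M := J K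
    set K := H - Htilde x C with hKdef
    have hKX : K * X = 0 := by
      rw [hKdef, Matrix.sub_mul, hHX, hHtX, sub_self]
    have hKSHam : Jᵀ * Kᵀ * J = K := by
      rw [hKdef, Matrix.transpose_sub, Matrix.mul_sub, Matrix.sub_mul,
        hSH, hHtSH]
    set M := J * K with hMdef
    have hMskew : Mᵀ = -M := by
      have h5 : Kᵀ * J = J * K := by
        have := congrArg (fun Z => J * Z) hKSHam
        simpa [← Matrix.mul_assoc, hJJt, Matrix.one_mul] using this
      rw [hMdef, Matrix.transpose_mul, hJt, Matrix.mul_neg, h5]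
    have hMX : M * X = 0 := by
      rw [hMdef, Matrix.mul_assoc, hKX, Matrix.mul_zero]
    have hMtX : Mᵀ * X = 0 := by rw [hMskew, Matrix.neg_mul, hMX, neg_zero]
    have hPM : Xperp * (Xperpᵀ * M) = M := hproj M hMtX
    have hPMt : Xperp * (Xperpᵀ * Mᵀ) = Mᵀ := hproj Mᵀ (by
      rw [Matrix.transpose_transpose]; exact hMX)
    refine ⟨Xperpᵀ * M * Xperp, ?_, ?_⟩
    · rw [Matrix.transpose_mul, Matrix.transpose_mul, Matrix.transpose_transpose,
        hMskew]
      simp [Matrix.mul_assoc]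
    · have hMS : Xperp * (Xperpᵀ * M * Xperp) * Xperpᵀ = M := by
        calc Xperp * (Xperpᵀ * M * Xperp) * Xperpᵀ
            = (Xperp * (Xperpᵀ * M)) * (Xperp * Xperpᵀ) := by
              simp only [Matrix.mul_assoc]
          _ = M * (Xperp * Xperpᵀ) := by rw [hPM]
          _ = (Xperp * Xperpᵀ * Mᵀ)ᵀ := by
              rw [Matrix.transpose_mul, Matrix.transpose_transpose,
                Matrix.transpose_mul, Matrix.transpose_transpose]
          _ = (Mᵀ)ᵀ := by rw [Matrix.mul_assoc, hPMt]
          _ = M := Matrix.transpose_transpose M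
      have hJK : Jᵀ * (Xperp * (Xperpᵀ * M * Xperp) * Xperpᵀ) = K := by
        rw [hMS, hMdef, ← Matrix.mul_assoc, hJtJ, Matrix.one_mul]
      rw [hJK, hKdef]
      abel
  · rintro ⟨S, hS, rfl⟩
    constructor
    · rw [IsSkewHamiltonian, Matrix.transpose_add, Matrix.mul_add,
        Matrix.add_mul]
      have := hKSH S hS
      rw [IsSkewHamiltonian] at this
      rw [this]
      have := hHtSH
      rw [IsSkewHamiltonian] at this
      rw [this]
    · rw [Matrix.add_mul, hHtX, Matrix.mul_assoc (Jᵀ), Matrix.mul_assoc,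
        Matrix.mul_assoc, hperpX, Matrix.mul_zero, Matrix.mul_zero,
        Matrix.mul_zero, add_zero]
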